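/- arXiv:1612.07089 — 2 statements merged into one kernel-verified Lean document; each statement's English description precedes it below -/
import Mathlib

section
/- Let G be a connected weighted graph on N ≥ 2 vertices whose edge weights w_{mn} satisfy w_{mn} ≥ ε_w > 0 for every edge (m,n) of G, and let L be its weighted graph Laplacian. Then the second-smallest eigenvalue (algebraic connectivity) a(G) satisfies a(G) ≥ 2ε_w/(N-1)². -/
lemma aux_sq (u v S k : ℝ) (hk : 0 ≤ k) (hS : 0 ≤ S) (hv : v^2 ≤ k * S) :
    (u+v)^2 ≤ (k+1) * (u^2 + S) := by
  rcases hk.lt_or_eq with hk' | hk'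
  · nlinarith [sq_nonneg (k*u - v), mul_le_mul_of_nonneg_left hv hk, hv, hS, hk']
  · rw [← hk'] at hv ⊢
    nlinarith [hv, hS]

noncomputable def gfun {V : Type*} (y : V → ℝ) : Sym2 V → ℝ :=
  Sym2.lift ⟨fun a b => (y a - y b)^2, fun _ _ => by ring⟩

lemma gfun_nonneg {V : Type*} (y : V → ℝ) (e : Sym2 V) : 0 ≤ gfun y e := by
  induction e using Sym2.ind with
  | _ a b => simpa [gfun] using sq_nonneg (y a - y b)

lemma walk_bound {V : Type*} [DecidableEq V] {G : SimpleGraph V} (y : V → ℝ) :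
    ∀ {a b : V} (p : G.Walk a b), p.IsTrail →
      (y a - y b)^2 ≤ (p.length : ℝ) * ∑ e ∈ p.edges.toFinset, gfun y e := by
  intro a b p
  induction p with
  | nil => intro _; simp
  | @cons a c b h q ih =>
    intro ht
    rw [SimpleGraph.Walk.isTrail_cons] at ht
    have hq := ih ht.1
    have hnotmem : s(a,c) ∉ q.edges.toFinset := by simpa using ht.2
    rw [SimpleGraph.Walk.edges_cons, List.toFinset_cons, Finset.sum_insert hnotmem,
      SimpleGraph.Walk.length_cons]
    have hS : 0 ≤ ∑ e ∈ q.edges.toFinset, gfun y e :=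
      Finset.sum_nonneg fun e _ => gfun_nonneg y e
    have key := aux_sq (y a - y c) (y c - y b) (∑ e ∈ q.edges.toFinset, gfun y e)
      (q.length : ℝ) (by positivity) hS hq
    have hg : gfun y (s(a,c)) = (y a - y c)^2 := rfl
    push_cast
    rw [hg]
    calc (y a - y b)^2 = ((y a - y c) + (y c - y b))^2 := by ring
    _ ≤ _ := key

/-- Algebraic connectivity lower bound: for a connected weighted graph on `N ≥ 2`
vertices whose edge weights are at least `εw > 0`, the variational Rayleigh quotient
defining the algebraic connectivity is at least `2 εw / (N-1)^2` for every nonzero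
mean-zero vector `y`. -/
theorem stmt0 (N : ℕ) (hN : 2 ≤ N) (w : Fin N → Fin N → ℝ)
    (hsym : ∀ m n, w m n = w n m) (hnonneg : ∀ m n, 0 ≤ w m n)
    (εw : ℝ) (hεw : 0 < εw)
    (hedge : ∀ m n, m ≠ n → 0 < w m n → εw ≤ w m n)
    (hconn : (SimpleGraph.fromRel (fun m n => 0 < w m n)).Connected)
    (y : Fin N → ℝ) (hy0 : ∑ m, y m = 0) (hy : y ≠ 0) :
    2 * εw / ((N : ℝ) - 1) ^ 2 ≤
      (N : ℝ) *
        ((∑ p ∈ Finset.univ.filter (fun p : Fin N × Fin N => p.1 < p.2),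
            w p.1 p.2 * (y p.1 - y p.2) ^ 2) /
         (∑ p ∈ Finset.univ.filter (fun p : Fin N × Fin N => p.1 < p.2),
            (y p.1 - y p.2) ^ 2)) := by
  classical
  set G := SimpleGraph.fromRel (fun m n : Fin N => 0 < w m n) with hGdef
  have hadj : ∀ a b : Fin N, G.Adj a b ↔ a ≠ b ∧ 0 < w a b := by
    intro a b
    rw [hGdef, SimpleGraph.fromRel_adj]
    constructor
    · rintro ⟨hne, h | h⟩
      · exact ⟨hne, h⟩
      · exact ⟨hne, by rw [hsym]; exact h⟩
    · rintro ⟨hne, h⟩; exact ⟨hne, Or.inl h⟩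
  set P : Finset (Fin N × Fin N) :=
    Finset.univ.filter (fun p : Fin N × Fin N => p.1 < p.2) with hPdef
  set E : Finset (Fin N × Fin N) :=
    Finset.univ.filter (fun p : Fin N × Fin N => p.1 < p.2 ∧ 0 < w p.1 p.2) with hEdef
  set SE : ℝ := ∑ p ∈ E, (y p.1 - y p.2) ^ 2 with hSEdef
  set F : Finset (Sym2 (Fin N)) := E.image (fun p => s(p.1, p.2)) with hFdef
  have hSE0 : 0 ≤ SE := Finset.sum_nonneg fun p _ => sq_nonneg _
  have hFsum : ∑ e ∈ F, gfun y e = SE := by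
    rw [hFdef, Finset.sum_image]
    · rfl
    · rintro ⟨a, b⟩ ha ⟨c, d⟩ hc hcd
      simp only [hEdef, Finset.mem_coe, Finset.mem_filter, Finset.mem_univ, true_and] at ha hc
      rw [Sym2.eq_iff] at hcd
      rcases hcd with ⟨rfl, rfl⟩ | ⟨rfl, rfl⟩
      · rfl
      · exact absurd (ha.1.trans hc.1) (lt_irrefl _)
  have hedgeF : ∀ e ∈ G.edgeSet, e ∈ F := by
    intro e
    induction e using Sym2.ind with
    | _ a b =>
      intro he
      rw [SimpleGraph.mem_edgeSet, hadj] at he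
      obtain ⟨hne, hw⟩ := he
      rcases hne.lt_or_gt with h | h
      · exact Finset.mem_image.mpr ⟨(a, b), by simp [hEdef, h, hw], rfl⟩
      · refine Finset.mem_image.mpr ⟨(b, a), by simp [hEdef, h, (hsym b a).symm ▸ hw], ?_⟩
        exact (Sym2.eq_swap).symm
  have hpair : ∀ m n : Fin N, (y m - y n) ^ 2 ≤ ((N : ℝ) - 1) * SE := by
    intro m n
    by_cases hmn : m = n
    · subst hmn
      have : (0:ℝ) ≤ ((N:ℝ) - 1) * SE := by
        apply mul_nonneg _ hSE0
        have : (2:ℝ) ≤ N := by exact_mod_cast hN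
        linarith
      simpa using this
    · obtain ⟨p⟩ := hconn.preconnected m n
      set q : G.Walk m n := (p.toPath : G.Walk m n) with hqdef
      have hqp : q.IsPath := p.toPath.2
      have hb := walk_bound y q hqp.isTrail
      have hlen : (q.length : ℝ) ≤ (N : ℝ) - 1 := by
        have h2 := hqp.length_lt
        rw [Fintype.card_fin] at h2
        have : (q.length : ℝ) + 1 ≤ N := by exact_mod_cast h2
        linarith
      have hsub : q.edges.toFinset ⊆ F := fun e he =>
        hedgeF e (q.edges_subset_edgeSet (List.mem_toFinset.mp he))
      have hsumle : ∑ e ∈ q.edges.toFinset, gfun y e ≤ SE := by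
        rw [← hFsum]
        exact Finset.sum_le_sum_of_subset_of_nonneg hsub fun e _ _ => gfun_nonneg y e
      calc (y m - y n) ^ 2 ≤ (q.length : ℝ) * ∑ e ∈ q.edges.toFinset, gfun y e := hb
        _ ≤ ((N : ℝ) - 1) * SE := by
            apply mul_le_mul hlen hsumle
            · exact Finset.sum_nonneg fun e _ => gfun_nonneg y e
            · have : (2:ℝ) ≤ N := by exact_mod_cast hN
              linarith
  -- cardinality of P
  have hcard2 : P.card * 2 = N * N - N := by
    have hQP : (Finset.univ.filter (fun p : Fin N × Fin N => p.2 < p.1)).card = P.card := by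
      apply Finset.card_bij' (fun p _ => Prod.swap p) (fun p _ => Prod.swap p)
      · rintro ⟨a, b⟩ h
        simp only [hPdef, Prod.swap_prod_mk, Finset.mem_filter, Finset.mem_univ,
          true_and] at h ⊢
        exact h
      · rintro ⟨a, b⟩ h
        simp only [hPdef, Prod.swap_prod_mk, Finset.mem_filter, Finset.mem_univ,
          true_and] at h ⊢
        exact h
      · rintro ⟨a, b⟩ _; rfl
      · rintro ⟨a, b⟩ _; rfl
    have hunion : (Finset.univ : Finset (Fin N)).offDiag =
        P ∪ Finset.univ.filter (fun p : Fin N × Fin N => p.2 < p.1) := by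
      ext ⟨a, b⟩
      simp only [Finset.mem_offDiag, Finset.mem_univ, true_and, Finset.mem_union,
        hPdef, Finset.mem_filter]
      exact ne_iff_lt_or_gt
    have hdisj : Disjoint P (Finset.univ.filter (fun p : Fin N × Fin N => p.2 < p.1)) := by
      rw [Finset.disjoint_left]
      rintro ⟨a, b⟩ h1 h2
      simp only [hPdef, Finset.mem_filter, Finset.mem_univ, true_and] at h1 h2
      exact absurd (h1.trans h2) (lt_irrefl _)
    have := Finset.offDiag_card (Finset.univ : Finset (Fin N))
    rw [hunion, Finset.card_union_of_disjoint hdisj, hQP, Finset.card_univ,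
      Fintype.card_fin] at this
    omega
  have hcardR : (P.card : ℝ) * 2 = (N : ℝ) * N - N := by
    have hle : N ≤ N * N := Nat.le_mul_of_pos_left N (by omega)
    have := hcard2
    have : ((P.card * 2 : ℕ) : ℝ) = ((N * N - N : ℕ) : ℝ) := by rw [this]
    push_cast [Nat.cast_sub hle] at this
    linarith
  set D : ℝ := ∑ p ∈ P, (y p.1 - y p.2) ^ 2 with hDdef
  set Num : ℝ := ∑ p ∈ P, w p.1 p.2 * (y p.1 - y p.2) ^ 2 with hNumdef
  have hDle : D ≤ P.card • (((N : ℝ) - 1) * SE) :=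
    Finset.sum_le_card_nsmul _ _ _ fun p _ => hpair p.1 p.2
  rw [nsmul_eq_mul] at hDle
  have hDpos : 0 < D := by
    rcases (Finset.sum_nonneg fun p (_ : p ∈ P) => sq_nonneg (y p.1 - y p.2)).lt_or_eq
      with h | h
    · exact h
    · exfalso
      have hz : ∀ p ∈ P, (y p.1 - y p.2) ^ 2 = 0 :=
        (Finset.sum_eq_zero_iff_of_nonneg fun p _ => sq_nonneg _).mp h.symm
      have hconst : ∀ a b : Fin N, y a = y b := by
        intro a b
        rcases lt_trichotomy a b with h' | h' | h'
        · have := hz (a, b) (by simp [hPdef, h'])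
          have := pow_eq_zero_iff (n := 2) (by norm_num) |>.mp this
          linarith
        · rw [h']
        · have := hz (b, a) (by simp [hPdef, h'])
          have := pow_eq_zero_iff (n := 2) (by norm_num) |>.mp this
          linarith
      apply hy
      set i0 : Fin N := ⟨0, by omega⟩ with hi0
      have hsum : ∑ m : Fin N, y m = N * y i0 := by
        rw [Finset.sum_congr rfl fun m _ => hconst m i0]
        simp [Finset.card_univ, mul_comm]
      have hNpos : (0:ℝ) < N := by
        have : (2:ℝ) ≤ N := by exact_mod_cast hN
        linarith
      have hz0 : (N:ℝ) * y i0 = 0 := by rw [← hsum]; exact hy0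
      have hy0' : y i0 = 0 := (mul_eq_zero.mp hz0).resolve_left hNpos.ne'
      funext m
      rw [hconst m i0, hy0']
      rfl
  have hEsubP : E ⊆ P := by
    intro p hp
    simp only [hEdef, Finset.mem_filter, Finset.mem_univ, true_and] at hp
    simp [hPdef, hp.1]
  have hNum : εw * SE ≤ Num := by
    rw [hSEdef, Finset.mul_sum]
    calc ∑ p ∈ E, εw * (y p.1 - y p.2) ^ 2
        ≤ ∑ p ∈ E, w p.1 p.2 * (y p.1 - y p.2) ^ 2 := by
          apply Finset.sum_le_sum
          intro p hp
          simp only [hEdef, Finset.mem_filter, Finset.mem_univ, true_and] at hp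
          exact mul_le_mul_of_nonneg_right (hedge p.1 p.2 hp.1.ne hp.2) (sq_nonneg _)
      _ ≤ Num := Finset.sum_le_sum_of_subset_of_nonneg hEsubP fun p _ _ =>
          mul_nonneg (hnonneg _ _) (sq_nonneg _)
  have hN1pos : (0:ℝ) < ((N:ℝ) - 1) ^ 2 := by
    have : (2:ℝ) ≤ N := by exact_mod_cast hN
    nlinarith
  have hNR : (2:ℝ) ≤ N := by exact_mod_cast hN
  have hgoal : (N:ℝ) * (Num / D) = ((N:ℝ) * Num) / D := by ring
  rw [hgoal, div_le_div_iff₀ hN1pos hDpos]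
  -- 2 * εw * D ≤ N * Num * (N-1)^2
  have h2D : 2 * D ≤ (N:ℝ) * ((N:ℝ) - 1) ^ 2 * SE := by
    nlinarith [hDle, hcardR, hSE0]
  nlinarith [mul_le_mul_of_nonneg_left h2D hεw.le,
    mul_le_mul_of_nonneg_left hNum (by nlinarith : (0:ℝ) ≤ (N:ℝ) * ((N:ℝ)-1)^2)]
end

section
/- Let B̄(X) be an N×N symmetric matrix-valued function with B̄(X)_{mn} = -c·δ̄(x_m, x_n) ≤ 0 for m ≠ n (c > 0) and diagonal entries making all row sums zero, where δ̄(x_m,x_n) = E[δ_{mn}]/√(‖x_m - x_n‖² + ε). Then for all X, Y ∈ ℝ^{N×P}: tr(Xᵀ B̄(X) X) ≥ tr(Xᵀ B̄(Y) Y), that is, -tr(Xᵀ B̄(X) X) ≤ -tr(Xᵀ B̄(Y) Y). -/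
open Matrix Finset

noncomputable def Bbar (N P : ℕ) (c : ℝ) (δ : Fin N → Fin N → ℝ)
    (Z : Matrix (Fin N) (Fin P) ℝ) : Matrix (Fin N) (Fin N) ℝ :=
  Matrix.of fun m n =>
    if m = n then
      ∑ k ∈ Finset.univ.erase m, c * δ m k / Real.sqrt (∑ j, (Z m j - Z k j) ^ 2)
    else
      -(c * δ m n / Real.sqrt (∑ j, (Z m j - Z n j) ^ 2))

section aux

variable {N P : ℕ} (c : ℝ) (δ : Fin N → Fin N → ℝ)

noncomputable def wgt (Z : Matrix (Fin N) (Fin P) ℝ) (m k : Fin N) : ℝ :=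
  c * δ m k / Real.sqrt (∑ j, (Z m j - Z k j) ^ 2)

lemma trace_form (A : Matrix (Fin N) (Fin N) ℝ) (X Y : Matrix (Fin N) (Fin P) ℝ) :
    (Xᵀ * A * Y).trace = ∑ m, ∑ k, A m k * ∑ j, X m j * Y k j := by
  simp only [Matrix.trace, Matrix.diag, Matrix.mul_apply, Matrix.transpose_apply,
    Finset.mul_sum, Finset.sum_mul]
  conv_rhs => rw [Finset.sum_comm]
  rw [Finset.sum_comm]
  refine Finset.sum_congr rfl fun k _ => ?_
  rw [Finset.sum_comm]
  refine Finset.sum_congr rfl fun m _ => ?_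
  refine Finset.sum_congr rfl fun j _ => ?_
  ring

lemma swap_sum (f : Fin N → Fin N → ℝ) :
    ∑ m, ∑ k ∈ Finset.univ.erase m, f m k = ∑ m, ∑ k ∈ Finset.univ.erase m, f k m := by
  rw [Finset.sum_comm' (s := Finset.univ) (t := fun m => Finset.univ.erase m)
    (t' := Finset.univ) (s' := fun k => Finset.univ.erase k)]
  intro m k
  simp [eq_comm, ne_comm]

lemma trace_Bbar (hδsym : ∀ m n, δ m n = δ n m) (Z X Y : Matrix (Fin N) (Fin P) ℝ) :
    (Xᵀ * Bbar N P c δ Z * Y).trace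
      = (1/2) * ∑ m, ∑ k ∈ Finset.univ.erase m,
          wgt c δ Z m k * ∑ j, (X m j - X k j) * (Y m j - Y k j) := by
  have hw : ∀ m k, wgt c δ Z m k = wgt c δ Z k m := by
    intro m k
    unfold wgt
    rw [hδsym]
    congr 2
    refine Finset.sum_congr rfl fun j _ => ?_
    ring
  rw [trace_form]
  have step1 : ∀ m : Fin N, ∑ k, Bbar N P c δ Z m k * ∑ j, X m j * Y k j
      = ∑ k ∈ Finset.univ.erase m, wgt c δ Z m k *
          ((∑ j, X m j * Y m j) - ∑ j, X m j * Y k j) := by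
    intro m
    rw [← Finset.add_sum_erase (a := m) _ _ (Finset.mem_univ m)]
    rw [show (Bbar N P c δ Z m m) = ∑ k ∈ Finset.univ.erase m, wgt c δ Z m k from by
      simp [Bbar, wgt]]
    rw [Finset.sum_mul, ← Finset.sum_add_distrib]
    refine Finset.sum_congr rfl fun k hk => ?_
    have hkm : ¬ (m = k) := fun h => (Finset.mem_erase.mp hk).1 h.symm
    rw [show (Bbar N P c δ Z m k) = -(wgt c δ Z m k) from by simp [Bbar, wgt, hkm]]
    ring
  simp only [step1]
  set f : Fin N → Fin N → ℝ := fun m k => wgt c δ Z m k *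
    ((∑ j, X m j * Y m j) - ∑ j, X m j * Y k j) with hf
  have swap := swap_sum (f := f)
  have expand : ∑ m, ∑ k ∈ Finset.univ.erase m, (f m k + f k m)
      = (∑ m, ∑ k ∈ Finset.univ.erase m, f m k)
        + ∑ m, ∑ k ∈ Finset.univ.erase m, f k m := by
    simp [Finset.sum_add_distrib]
  have two : ∑ m, ∑ k ∈ Finset.univ.erase m, f m k
      = (1/2) * ∑ m, ∑ k ∈ Finset.univ.erase m, (f m k + f k m) := by
    rw [expand, ← swap]; ring
  rw [two]
  congr 1
  refine Finset.sum_congr rfl fun m _ => Finset.sum_congr rfl fun k hk => ?_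
  have hsum : ∑ j, (X m j - X k j) * (Y m j - Y k j)
      = (∑ j, X m j * Y m j) - (∑ j, X m j * Y k j)
        - ((∑ j, X k j * Y m j) - ∑ j, X k j * Y k j) := by
    simp only [sub_mul, mul_sub, Finset.sum_sub_distrib]
    ring
  rw [hsum, hf]
  simp only
  rw [← hw m k]
  ring

lemma sq_sum_pos (X : Matrix (Fin N) (Fin P) ℝ) {m k : Fin N}
    (h : (fun j => X m j) ≠ (fun j => X k j)) : 0 < ∑ j, (X m j - X k j) ^ 2 := by
  obtain ⟨j, hj⟩ := Function.ne_iff.mp h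
  refine Finset.sum_pos' (fun i _ => sq_nonneg _) ⟨j, Finset.mem_univ j, ?_⟩
  have : X m j - X k j ≠ 0 := sub_ne_zero.mpr hj
  positivity

end aux

/-- Cauchy–Schwarz majorization of the cross term: for `B̄` as above (with `ε = 0` and
pairwise distinct rows), `tr(Xᵀ B̄(X) X) ≥ tr(Xᵀ B̄(Y) Y)` for all `X, Y`. -/
theorem stmt18 (N P : ℕ) (c : ℝ) (hc : 0 < c) (δ : Fin N → Fin N → ℝ)
    (hδpos : ∀ m n, m ≠ n → 0 < δ m n) (hδsym : ∀ m n, δ m n = δ n m)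
    (X Y : Matrix (Fin N) (Fin P) ℝ)
    (hX : ∀ m n, m ≠ n → (fun j => X m j) ≠ (fun j => X n j))
    (hY : ∀ m n, m ≠ n → (fun j => Y m j) ≠ (fun j => Y n j)) :
    (Xᵀ * Bbar N P c δ Y * Y).trace ≤ (Xᵀ * Bbar N P c δ X * X).trace := by
  rw [trace_Bbar c δ hδsym Y X Y, trace_Bbar c δ hδsym X X X]
  have half : (0:ℝ) ≤ 1/2 := by norm_num
  apply mul_le_mul_of_nonneg_left _ half
  refine Finset.sum_le_sum fun m _ => Finset.sum_le_sum fun k hk => ?_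
  have hmk : m ≠ k := fun h => ((Finset.mem_erase.mp hk).1 h.symm).elim
  set a2 := ∑ j, (X m j - X k j) ^ 2 with ha2def
  set b2 := ∑ j, (Y m j - Y k j) ^ 2 with hb2def
  have ha2 : 0 < a2 := sq_sum_pos X (hX m k hmk)
  have hb2 : 0 < b2 := sq_sum_pos Y (hY m k hmk)
  set a := Real.sqrt a2 with hadef
  set b := Real.sqrt b2 with hbdef
  have ha : 0 < a := Real.sqrt_pos.mpr ha2
  have hb : 0 < b := Real.sqrt_pos.mpr hb2
  have hcd : 0 < c * δ m k := mul_pos hc (hδpos m k hmk)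
  set I := ∑ j, (X m j - X k j) * (Y m j - Y k j) with hIdef
  -- Cauchy–Schwarz: I ≤ a * b
  have hCS : I ≤ a * b := by
    have h1 : I ≤ |I| := le_abs_self _
    have h2 : |I| = Real.sqrt (I ^ 2) := (Real.sqrt_sq_eq_abs I).symm
    have h3 : I ^ 2 ≤ a2 * b2 :=
      Finset.sum_mul_sq_le_sq_mul_sq Finset.univ _ _
    calc I ≤ Real.sqrt (I ^ 2) := h2 ▸ h1
      _ ≤ Real.sqrt (a2 * b2) := Real.sqrt_le_sqrt h3
      _ = a * b := Real.sqrt_mul ha2.le _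
  have hXX : ∑ j, (X m j - X k j) * (X m j - X k j) = a2 := by
    rw [ha2def]; exact Finset.sum_congr rfl fun j _ => (pow_two _).symm
  have hRHS : wgt c δ X m k * ∑ j, (X m j - X k j) * (X m j - X k j) = c * δ m k * a := by
    rw [hXX]
    show c * δ m k / a * a2 = c * δ m k * a
    have : a2 = a * a := (Real.mul_self_sqrt ha2.le).symm
    rw [this]
    field_simp
  have hLHS : wgt c δ Y m k * I = c * δ m k * I / b := by
    show c * δ m k / b * I = _
    ring
  rw [hLHS, hRHS]
  rw [div_le_iff₀ hb]
  calc c * δ m k * I ≤ c * δ m k * (a * b) := by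
        exact mul_le_mul_of_nonneg_left hCS hcd.le
    _ = c * δ m k * a * b := by ring
end
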